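/- Let A, B, X, Y be jointly distributed random variables with finite ranges such that the triple (A,X,Y) satisfies condition (B): for all a, x, y, if p(a,x) > 0 and p(a,y) > 0 then p(a,x,y) > 0. Then I(A:B) ≤ I(A:B | X) + I(A:B | Y) + Δ', where Δ' is the maximum over all triples (a,x,y) with p(a,x,y) > 0 of log₂( p(a,x)·p(a,y)·p(x,y) / ( p(a)·p(x)·p(y)·p(a,x,y) ) ). -/

import Mathlib

open Finset

noncomputable section

/-- Probability of an event under a distribution on a finite sample space. -/
def pr {Ω : Type*} [Fintype Ω] (p : Ω → ℝ) (E : Set Ω) : ℝ :=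
  ∑ ω, E.indicator p ω

/-- `p` is a probability mass function on the finite sample space `Ω`. -/
def IsPMF {Ω : Type*} [Fintype Ω] (p : Ω → ℝ) : Prop :=
  (∀ ω, 0 ≤ p ω) ∧ ∑ ω, p ω = 1

/-- Shannon entropy (base 2) of a random variable `V` on a finite sample space. -/
def ent {Ω β : Type*} [Fintype Ω] [Fintype β] (p : Ω → ℝ) (V : Ω → β) : ℝ :=
  -∑ v, pr p {ω | V ω = v} * Real.logb 2 (pr p {ω | V ω = v})

/-- Conditional Shannon entropy (base 2): `H(V | W)`. -/
def condEnt {Ω β γ : Type*} [Fintype Ω] [Fintype β] [Fintype γ]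
    (p : Ω → ℝ) (V : Ω → β) (W : Ω → γ) : ℝ :=
  ent p (fun ω => (V ω, W ω)) - ent p W

/-- Mutual information (base 2): `I(V : W)`. -/
def mi {Ω β γ : Type*} [Fintype Ω] [Fintype β] [Fintype γ]
    (p : Ω → ℝ) (V : Ω → β) (W : Ω → γ) : ℝ :=
  ent p V + ent p W - ent p (fun ω => (V ω, W ω))

/-- Conditional mutual information (base 2): `I(V : W | U)`. -/
def cmi {Ω β γ δ : Type*} [Fintype Ω] [Fintype β] [Fintype γ] [Fintype δ]
    (p : Ω → ℝ) (V : Ω → β) (W : Ω → γ) (U : Ω → δ) : ℝ :=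
  ent p (fun ω => (V ω, U ω)) + ent p (fun ω => (W ω, U ω))
    - ent p (fun ω => (V ω, W ω, U ω)) - ent p U

end

noncomputable section AuxHelpers
open Classical Real

variable {Ω : Type*} [Fintype Ω] (p : Ω → ℝ)

/-- event probability as a sum of ite -/
def pe (Q : Ω → Prop) : ℝ := ∑ ω, if Q ω then p ω else 0

lemma pr_eq_pe (Q : Ω → Prop) : pr p {ω | Q ω} = pe p Q := by
  simp [pr, pe, Set.indicator_apply, Set.mem_setOf_eq]

lemma pe_nonneg (hp : ∀ ω, 0 ≤ p ω) (Q : Ω → Prop) : 0 ≤ pe p Q := by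
  apply Finset.sum_nonneg
  intro ω _
  by_cases h : Q ω <;> simp [h, hp ω]

lemma pe_congr {Q R : Ω → Prop} (h : ∀ ω, Q ω ↔ R ω) : pe p Q = pe p R := by
  unfold pe
  exact Finset.sum_congr rfl fun ω _ => by by_cases hq : Q ω <;> simp [hq, (h ω).symm, h ω]

lemma pe_mono (hp : ∀ ω, 0 ≤ p ω) {Q R : Ω → Prop} (h : ∀ ω, Q ω → R ω) :
    pe p Q ≤ pe p R := by
  apply Finset.sum_le_sum
  intro ω _
  by_cases hq : Q ω
  · simp [hq, h ω hq]
  · by_cases hr : R ω <;> simp [hq, hr, hp ω]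

lemma pe_marg {γ : Type*} [Fintype γ] (Q : Ω → Prop) (C : Ω → γ) :
    ∑ c, pe p (fun ω => Q ω ∧ C ω = c) = pe p Q := by
  unfold pe
  rw [Finset.sum_comm]
  refine Finset.sum_congr rfl fun ω _ => ?_
  by_cases hq : Q ω
  · simp [hq]
  · simp [hq]

lemma pe_total {γ : Type*} [Fintype γ] (C : Ω → γ) :
    ∑ c, pe p (fun ω => C ω = c) = ∑ ω, p ω := by
  unfold pe
  rw [Finset.sum_comm]
  refine Finset.sum_congr rfl fun ω _ => ?_
  simp

lemma exists_pos_of_sum_pos' {ι : Type*} {s : Finset ι} {f : ι → ℝ}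
    (h : 0 < ∑ i ∈ s, f i) : ∃ i ∈ s, 0 < f i := by
  by_contra hc
  push_neg at hc
  exact absurd (Finset.sum_nonpos hc) (by linarith)

/-- log-sum inequality -/
lemma gibbs {ι : Type*} (s : Finset ι) (u v : ι → ℝ)
    (hu : ∀ i ∈ s, 0 ≤ u i) (hv : ∀ i ∈ s, 0 ≤ v i)
    (huv : ∀ i ∈ s, 0 < u i → 0 < v i) :
    (∑ i ∈ s, u i) * Real.logb 2 ((∑ i ∈ s, u i) / (∑ i ∈ s, v i))
      ≤ ∑ i ∈ s, u i * Real.logb 2 (u i / v i) := by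
  rcases eq_or_lt_of_le (Finset.sum_nonneg hu) with h0 | hUpos
  · have hz : ∀ i ∈ s, u i = 0 :=
      (Finset.sum_eq_zero_iff_of_nonneg hu).mp h0.symm
    rw [← h0]
    have hz2 : ∀ i ∈ s, u i * Real.logb 2 (u i / v i) = 0 := fun i hi => by rw [hz i hi]; ring
    rw [Finset.sum_congr rfl hz2]
    simp
  · set U := ∑ i ∈ s, u i with hU
    have hVpos : 0 < ∑ i ∈ s, v i := by
      obtain ⟨i, hi, hupos⟩ := exists_pos_of_sum_pos' hUpos
      exact lt_of_lt_of_le (huv i hi hupos) (Finset.single_le_sum hv hi)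
    set V := ∑ i ∈ s, v i with hV
    have hUpos' : 0 < U := hUpos
    have key : U * Real.log (U / V) ≤ ∑ i ∈ s, u i * Real.log (u i / v i) := by
      have hterm : ∀ i ∈ s, u i - (U / V) * v i + u i * Real.log (U / V)
          ≤ u i * Real.log (u i / v i) := by
        intro i hi
        rcases eq_or_lt_of_le (hu i hi) with h0i | hpos
        · have hvn := hv i hi
          rw [← h0i]
          have : (0:ℝ) ≤ U / V * v i := by positivity
          nlinarith
        · have hvpos := huv i hi hpos
          have h1 : Real.log (v i * U / (u i * V)) ≤ v i * U / (u i * V) - 1 :=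
            Real.log_le_sub_one_of_pos (by positivity)
          have h2 : Real.log (v i * U / (u i * V)) = Real.log (U/V) - Real.log (u i / v i) := by
            rw [Real.log_div (by positivity) (by positivity),
               Real.log_mul (ne_of_gt hvpos) (ne_of_gt hUpos'),
               Real.log_mul (ne_of_gt hpos) (ne_of_gt hVpos),
               Real.log_div (ne_of_gt hUpos') (ne_of_gt hVpos),
               Real.log_div (ne_of_gt hpos) (ne_of_gt hvpos)]
            ring
          have h3 : u i * (v i * U / (u i * V)) = U / V * v i := by
            field_simp
          nlinarith [hpos]
      calc U * Real.log (U / V) = U - (U/V) * V + U * Real.log (U/V) := by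
              rw [div_mul_cancel₀ _ (ne_of_gt hVpos)]; ring
        _ = ∑ i ∈ s, (u i - (U/V) * v i + u i * Real.log (U/V)) := by
              rw [Finset.sum_add_distrib, Finset.sum_sub_distrib, ← Finset.mul_sum,
                ← Finset.sum_mul, ← hU, ← hV]
        _ ≤ ∑ i ∈ s, u i * Real.log (u i / v i) := Finset.sum_le_sum hterm
    have hlog2 : (0:ℝ) < Real.log 2 := Real.log_pos (by norm_num)
    have hrw : ∀ i ∈ s, u i * Real.logb 2 (u i / v i) = (u i * Real.log (u i / v i)) / Real.log 2 := by
      intro i _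
      rw [Real.logb]; ring
    rw [Finset.sum_congr rfl hrw, ← Finset.sum_div, Real.logb]
    calc U * (Real.log (U/V) / Real.log 2) = (U * Real.log (U/V))/Real.log 2 := by ring
      _ ≤ _ := div_le_div_of_nonneg_right key hlog2.le

/-- core2 : rewriting of mutual information sums -/
lemma core2 {α β : Type*} [Fintype α] [Fintype β] (P2 : α → β → ℝ) (PA : α → ℝ) (PB : β → ℝ)
    (hPA : ∀ a, PA a = ∑ b, P2 a b) (hPB : ∀ b, PB b = ∑ a, P2 a b) :
    (-∑ a, PA a * Real.logb 2 (PA a)) + (-∑ b, PB b * Real.logb 2 (PB b))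
      - (-∑ a, ∑ b, P2 a b * Real.logb 2 (P2 a b))
    = ∑ a, ∑ b, P2 a b *
        (Real.logb 2 (P2 a b) - Real.logb 2 (PA a) - Real.logb 2 (PB b)) := by
  have h1 : ∑ a, PA a * Real.logb 2 (PA a) = ∑ a, ∑ b, P2 a b * Real.logb 2 (PA a) := by
    refine Finset.sum_congr rfl fun a _ => ?_
    rw [hPA a, Finset.sum_mul]
  have h2 : ∑ b, PB b * Real.logb 2 (PB b) = ∑ a, ∑ b, P2 a b * Real.logb 2 (PB b) := by
    rw [Finset.sum_comm]
    refine Finset.sum_congr rfl fun b _ => ?_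
    rw [hPB b, Finset.sum_mul]
  simp only [mul_sub, Finset.sum_sub_distrib]
  rw [h1, h2]
  ring

end AuxHelpers


noncomputable section EntLemmas
open Classical Real
variable {Ω : Type*} [Fintype Ω] (p : Ω → ℝ)

lemma ent_single {β : Type*} [Fintype β] (V : Ω → β) :
    ent p V = -∑ b, pe p (fun ω => V ω = b) * Real.logb 2 (pe p (fun ω => V ω = b)) := by
  simp only [ent, pr_eq_pe]

lemma ent_pair {β γ : Type*} [Fintype β] [Fintype γ] (V : Ω → β) (W : Ω → γ) :
    ent p (fun ω => (V ω, W ω)) = -∑ b, ∑ c,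
      pe p (fun ω => V ω = b ∧ W ω = c) * Real.logb 2 (pe p (fun ω => V ω = b ∧ W ω = c)) := by
  rw [ent, Fintype.sum_prod_type]
  congr 1
  refine Finset.sum_congr rfl fun b _ => Finset.sum_congr rfl fun c _ => ?_
  have h : pr p {ω | (V ω, W ω) = (b, c)} = pe p (fun ω => V ω = b ∧ W ω = c) := by
    rw [pr_eq_pe]
    exact pe_congr p fun ω => by simp [Prod.ext_iff]
  rw [h]

lemma ent_triple {β γ δ : Type*} [Fintype β] [Fintype γ] [Fintype δ]
    (V : Ω → β) (W : Ω → γ) (U : Ω → δ) :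
    ent p (fun ω => (V ω, W ω, U ω)) = -∑ b, ∑ c, ∑ d,
      pe p (fun ω => V ω = b ∧ W ω = c ∧ U ω = d)
        * Real.logb 2 (pe p (fun ω => V ω = b ∧ W ω = c ∧ U ω = d)) := by
  rw [ent, Fintype.sum_prod_type]
  congr 1
  refine Finset.sum_congr rfl fun b _ => ?_
  rw [Fintype.sum_prod_type]
  refine Finset.sum_congr rfl fun c _ => Finset.sum_congr rfl fun d _ => ?_
  have h : pr p {ω | (V ω, W ω, U ω) = (b, c, d)}
      = pe p (fun ω => V ω = b ∧ W ω = c ∧ U ω = d) := by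
    rw [pr_eq_pe]
    exact pe_congr p fun ω => by simp [Prod.ext_iff]
  rw [h]

end EntLemmas

section Core1
open Finset Real
lemma core1 {α β χ : Type*} [Fintype α] [Fintype β] [Fintype χ]
    (P3 : α → β → χ → ℝ) (PAX : α → χ → ℝ) (PBX : β → χ → ℝ) (PX : χ → ℝ) (PAB : α → β → ℝ)
    (h3 : ∀ a b x, 0 ≤ P3 a b x)
    (hPAX : ∀ a x, PAX a x = ∑ b, P3 a b x)
    (hPBX : ∀ b x, PBX b x = ∑ a, P3 a b x)
    (hPX : ∀ x, PX x = ∑ a, ∑ b, P3 a b x)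
    (hPAB : ∀ a b, PAB a b = ∑ x, P3 a b x) :
    ∑ a, ∑ b, PAB a b * Real.logb 2 (PAB a b / ∑ x, PAX a x * PBX b x / PX x)
      ≤ (-∑ a, ∑ x, PAX a x * Real.logb 2 (PAX a x))
        + (-∑ b, ∑ x, PBX b x * Real.logb 2 (PBX b x))
        - (-∑ a, ∑ b, ∑ x, P3 a b x * Real.logb 2 (P3 a b x))
        - (-∑ x, PX x * Real.logb 2 (PX x)) := by
  have hPAXnn : ∀ a x, 0 ≤ PAX a x := fun a x => by
    rw [hPAX]; exact Finset.sum_nonneg fun b _ => h3 a b x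
  have hPBXnn : ∀ b x, 0 ≤ PBX b x := fun b x => by
    rw [hPBX]; exact Finset.sum_nonneg fun a _ => h3 a b x
  have hPXnn : ∀ x, 0 ≤ PX x := fun x => by
    rw [hPX]; exact Finset.sum_nonneg fun a _ => Finset.sum_nonneg fun b _ => h3 a b x
  -- positivity of marginals above a positive joint value
  have hgeAX : ∀ a b x, P3 a b x ≤ PAX a x := fun a b x => by
    rw [hPAX]; exact Finset.single_le_sum (fun b' _ => h3 a b' x) (Finset.mem_univ b)
  have hgeBX : ∀ a b x, P3 a b x ≤ PBX b x := fun a b x => by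
    rw [hPBX]; exact Finset.single_le_sum (fun a' _ => h3 a' b x) (Finset.mem_univ a)
  have hgeX : ∀ a x, PAX a x ≤ PX x := fun a x => by
    rw [hPX]
    calc PAX a x = ∑ b, P3 a b x := hPAX a x
      _ ≤ ∑ a', ∑ b, P3 a' b x :=
          Finset.single_le_sum (f := fun a' => ∑ b, P3 a' b x)
            (fun a' _ => Finset.sum_nonneg fun b _ => h3 a' b x) (Finset.mem_univ a)
  -- rewrite RHS as a triple sum
  have r1 : ∑ a, ∑ x, PAX a x * Real.logb 2 (PAX a x)
      = ∑ a, ∑ b, ∑ x, P3 a b x * Real.logb 2 (PAX a x) := by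
    refine Finset.sum_congr rfl fun a _ => ?_
    rw [Finset.sum_comm]
    refine Finset.sum_congr rfl fun x _ => ?_
    rw [hPAX, Finset.sum_mul]
  have r2 : ∑ b, ∑ x, PBX b x * Real.logb 2 (PBX b x)
      = ∑ a, ∑ b, ∑ x, P3 a b x * Real.logb 2 (PBX b x) := by
    rw [show (∑ a, ∑ b, ∑ x, P3 a b x * Real.logb 2 (PBX b x))
        = ∑ b, ∑ a, ∑ x, P3 a b x * Real.logb 2 (PBX b x) from Finset.sum_comm]
    refine Finset.sum_congr rfl fun b _ => ?_
    rw [Finset.sum_comm]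
    refine Finset.sum_congr rfl fun x _ => ?_
    rw [hPBX, Finset.sum_mul]
  have r3 : ∑ x, PX x * Real.logb 2 (PX x)
      = ∑ a, ∑ b, ∑ x, P3 a b x * Real.logb 2 (PX x) := by
    rw [show (∑ a, ∑ b, ∑ x, P3 a b x * Real.logb 2 (PX x))
        = ∑ x, ∑ a, ∑ b, P3 a b x * Real.logb 2 (PX x) from ?_]
    · refine Finset.sum_congr rfl fun x _ => ?_
      rw [hPX, Finset.sum_mul]
      exact Finset.sum_congr rfl fun a _ => by rw [Finset.sum_mul]
    · rw [show (∑ a, ∑ b, ∑ x, P3 a b x * Real.logb 2 (PX x))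
          = ∑ a, ∑ x, ∑ b, P3 a b x * Real.logb 2 (PX x) from
          Finset.sum_congr rfl fun a _ => Finset.sum_comm]
      exact Finset.sum_comm
  have hRHS : (-∑ a, ∑ x, PAX a x * Real.logb 2 (PAX a x))
        + (-∑ b, ∑ x, PBX b x * Real.logb 2 (PBX b x))
        - (-∑ a, ∑ b, ∑ x, P3 a b x * Real.logb 2 (P3 a b x))
        - (-∑ x, PX x * Real.logb 2 (PX x))
      = ∑ a, ∑ b, ∑ x, P3 a b x *
          Real.logb 2 (P3 a b x / (PAX a x * PBX b x / PX x)) := by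
    rw [r1, r2, r3]
    have : ∀ a b x, P3 a b x * Real.logb 2 (P3 a b x / (PAX a x * PBX b x / PX x))
        = P3 a b x * Real.logb 2 (P3 a b x) + P3 a b x * Real.logb 2 (PX x)
          - P3 a b x * Real.logb 2 (PAX a x) - P3 a b x * Real.logb 2 (PBX b x) := by
      intro a b x
      rcases eq_or_lt_of_le (h3 a b x) with h0 | hpos
      · rw [← h0]; ring
      · have h1 : 0 < PAX a x := lt_of_lt_of_le hpos (hgeAX a b x)
        have h2 : 0 < PBX b x := lt_of_lt_of_le hpos (hgeBX a b x)
        have h4 : 0 < PX x := lt_of_lt_of_le h1 (hgeX a x)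
        rw [div_div_eq_mul_div, Real.logb_div (by positivity) (by positivity),
          Real.logb_mul (ne_of_gt hpos) (ne_of_gt h4),
          Real.logb_mul (ne_of_gt h1) (ne_of_gt h2)]
        ring
    simp only [this, Finset.sum_add_distrib, Finset.sum_sub_distrib]
    ring
  rw [hRHS]
  apply Finset.sum_le_sum
  intro a _
  apply Finset.sum_le_sum
  intro b _
  have := gibbs Finset.univ (fun x => P3 a b x) (fun x => PAX a x * PBX b x / PX x)
    (fun x _ => h3 a b x)
    (fun x _ => by
      have := hPAXnn a x; have := hPBXnn b x; have := hPXnn x; positivity)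
    (fun x _ hpos => by
      have h1 : 0 < PAX a x := lt_of_lt_of_le hpos (hgeAX a b x)
      have h2 : 0 < PBX b x := lt_of_lt_of_le hpos (hgeBX a b x)
      have h4 : 0 < PX x := lt_of_lt_of_le h1 (hgeX a x)
      positivity)
  rw [hPAB]
  exact this

end Core1

section Core3
open Finset Real
lemma core3 {α β χ υ : Type*} [Fintype α] [Fintype β] [Fintype χ] [Fintype υ]
    (P2 : α → β → ℝ) (PA : α → ℝ) (PB : β → ℝ) (PX : χ → ℝ) (PY : υ → ℝ)
    (PAX : α → χ → ℝ) (PAY : α → υ → ℝ) (PBX : β → χ → ℝ) (PBY : β → υ → ℝ)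
    (PXY : χ → υ → ℝ) (PAXY : α → χ → υ → ℝ) (κ : ℝ)
    (hP2nn : ∀ a b, 0 ≤ P2 a b) (hPAnn : ∀ a, 0 ≤ PA a) (hPBnn : ∀ b, 0 ≤ PB b)
    (hPXnn : ∀ x, 0 ≤ PX x) (hPYnn : ∀ y, 0 ≤ PY y)
    (hPAXnn : ∀ a x, 0 ≤ PAX a x) (hPAYnn : ∀ a y, 0 ≤ PAY a y)
    (hPBXnn : ∀ b x, 0 ≤ PBX b x) (hPBYnn : ∀ b y, 0 ≤ PBY b y)
    (hPXYnn : ∀ x y, 0 ≤ PXY x y) (hPAXYnn : ∀ a x y, 0 ≤ PAXY a x y)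
    (hP2A : ∀ a b, P2 a b ≤ PA a) (hP2B : ∀ a b, P2 a b ≤ PB b)
    (hAX_A : ∀ a x, PAX a x ≤ PA a) (hAX_X : ∀ a x, PAX a x ≤ PX x)
    (hAY_Y : ∀ a y, PAY a y ≤ PY y)
    (hmargA : ∀ x y, ∑ a, PAXY a x y = PXY x y)
    (hmargX : ∀ b, ∑ x, PBX b x = PB b) (hmargY : ∀ b, ∑ y, PBY b y = PB b)
    (hsum2 : ∑ a, ∑ b, P2 a b = 1) (hsumB : ∑ b, PB b = 1)
    (hs1pos : ∀ a b, 0 < P2 a b → 0 < ∑ x, PAX a x * PBX b x / PX x)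
    (hs2pos : ∀ a b, 0 < P2 a b → 0 < ∑ y, PAY a y * PBY b y / PY y)
    (hpos : ∀ a x y, 0 < PAX a x → 0 < PAY a y → 0 < PAXY a x y)
    (hkey : ∀ a x y, 0 < PAX a x → 0 < PAY a y →
      PAX a x * PAY a y * PXY x y ≤ κ * (PA a * PX x * PY y * PAXY a x y))
    (hκ : 0 < κ) :
    ∑ a, ∑ b, (P2 a b * (Real.logb 2 (P2 a b) - Real.logb 2 (PA a) - Real.logb 2 (PB b))
        - P2 a b * Real.logb 2 (P2 a b / ∑ x, PAX a x * PBX b x / PX x)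
        - P2 a b * Real.logb 2 (P2 a b / ∑ y, PAY a y * PBY b y / PY y))
      ≤ Real.logb 2 κ := by
  set s1 : α → β → ℝ := fun a b => ∑ x, PAX a x * PBX b x / PX x with hs1
  set s2 : α → β → ℝ := fun a b => ∑ y, PAY a y * PBY b y / PY y with hs2
  have hs1nn : ∀ a b, 0 ≤ s1 a b := fun a b =>
    Finset.sum_nonneg fun x _ => div_nonneg (mul_nonneg (hPAXnn a x) (hPBXnn b x)) (hPXnn x)
  have hs2nn : ∀ a b, 0 ≤ s2 a b := fun a b =>
    Finset.sum_nonneg fun y _ => div_nonneg (mul_nonneg (hPAYnn a y) (hPBYnn b y)) (hPYnn y)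
  set W : α → β → ℝ := fun a b => s1 a b * s2 a b / (P2 a b * (PA a * PB b)) with hW
  -- pointwise rewrite of the summand
  have eq1 : ∀ a b, P2 a b * (Real.logb 2 (P2 a b) - Real.logb 2 (PA a) - Real.logb 2 (PB b))
        - P2 a b * Real.logb 2 (P2 a b / s1 a b)
        - P2 a b * Real.logb 2 (P2 a b / s2 a b)
      = P2 a b * Real.logb 2 (W a b) := by
    intro a b
    rcases eq_or_lt_of_le (hP2nn a b) with h0 | hP2pos
    · rw [← h0]; ring
    · have h1 := hs1pos a b hP2pos
      have h2 := hs2pos a b hP2pos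
      have hA : 0 < PA a := lt_of_lt_of_le hP2pos (hP2A a b)
      have hBp : 0 < PB b := lt_of_lt_of_le hP2pos (hP2B a b)
      rw [hW]
      rw [Real.logb_div (ne_of_gt hP2pos) (ne_of_gt h1),
        Real.logb_div (ne_of_gt hP2pos) (ne_of_gt h2),
        Real.logb_div (by positivity) (by positivity),
        Real.logb_mul (ne_of_gt h1) (ne_of_gt h2),
        Real.logb_mul (ne_of_gt hP2pos) (by positivity),
        Real.logb_mul (ne_of_gt hA) (ne_of_gt hBp)]
      ring
  -- main combinatorial bound : ∑∑ P2 * W ≤ κ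
  have main : ∑ a, ∑ b, P2 a b * W a b ≤ κ := by
    -- step 3a-3b : P2 * W ≤ double sum of (x,y)-terms
    have h3a : ∀ a b, P2 a b * W a b ≤
        ∑ x, ∑ y, κ * (PAXY a x y * (PBX b x * PBY b y / (PXY x y * PB b))) := by
      intro a b
      have hb1 : P2 a b * W a b ≤ s1 a b * s2 a b / (PA a * PB b) := by
        rcases eq_or_lt_of_le (hP2nn a b) with h0 | hP2pos
        · rw [← h0]
          rw [zero_mul]
          exact div_nonneg (mul_nonneg (hs1nn a b) (hs2nn a b))
            (mul_nonneg (hPAnn a) (hPBnn b))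
        · have hA : 0 < PA a := lt_of_lt_of_le hP2pos (hP2A a b)
          have hBp : 0 < PB b := lt_of_lt_of_le hP2pos (hP2B a b)
          rw [hW]
          rw [show P2 a b * (s1 a b * s2 a b / (P2 a b * (PA a * PB b)))
              = s1 a b * s2 a b / (PA a * PB b) from by
            field_simp]
      have hb2 : s1 a b * s2 a b / (PA a * PB b)
          = ∑ x, ∑ y, (PAX a x * PBX b x / PX x) * (PAY a y * PBY b y / PY y) / (PA a * PB b) := by
        rw [hs1, hs2, Finset.sum_mul_sum, Finset.sum_div]
        exact Finset.sum_congr rfl fun x _ => by rw [Finset.sum_div]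
      have hb3 : ∀ x y, (PAX a x * PBX b x / PX x) * (PAY a y * PBY b y / PY y) / (PA a * PB b)
          ≤ κ * (PAXY a x y * (PBX b x * PBY b y / (PXY x y * PB b))) := by
        intro x y
        have hnn : (0:ℝ) ≤ κ * (PAXY a x y * (PBX b x * PBY b y / (PXY x y * PB b))) := by
          have := hPAXYnn a x y; have := hPBXnn b x; have := hPBYnn b y
          have := hPXYnn x y; have := hPBnn b
          positivity
        rcases eq_or_lt_of_le (hPAXnn a x) with z1 | p1
        · rw [← z1]
          simp only [zero_mul, zero_div]
          exact hnn
        rcases eq_or_lt_of_le (hPBXnn b x) with z2 | p2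
        · rw [← z2]
          simp only [mul_zero, zero_div, zero_mul]
          exact le_rfl
        rcases eq_or_lt_of_le (hPAYnn a y) with z3 | p3
        · rw [← z3]
          simp only [zero_mul, zero_div, mul_zero]
          exact hnn
        rcases eq_or_lt_of_le (hPBYnn b y) with z4 | p4
        · rw [← z4]
          simp only [mul_zero, zero_div]
          exact le_rfl
        · have hAXY : 0 < PAXY a x y := hpos a x y p1 p3
          have hXY : 0 < PXY x y := lt_of_lt_of_le hAXY (by
            rw [← hmargA x y]
            exact Finset.single_le_sum (fun a' _ => hPAXYnn a' x y) (Finset.mem_univ a))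
          have hA : 0 < PA a := lt_of_lt_of_le p1 (hAX_A a x)
          have hXp : 0 < PX x := lt_of_lt_of_le p1 (hAX_X a x)
          have hYp : 0 < PY y := lt_of_lt_of_le p3 (hAY_Y a y)
          have hBp : 0 < PB b := lt_of_lt_of_le p2 (by
            rw [← hmargX b]
            exact Finset.single_le_sum (fun x' _ => hPBXnn b x') (Finset.mem_univ x))
          have e1 : (PAX a x * PBX b x / PX x) * (PAY a y * PBY b y / PY y) / (PA a * PB b)
              = (PAX a x * PAY a y * PXY x y) * (PBX b x * PBY b y)
                / (PX x * PY y * PA a * PB b * PXY x y) := by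
            field_simp
          have e2 : κ * (PAXY a x y * (PBX b x * PBY b y / (PXY x y * PB b)))
              = (κ * (PA a * PX x * PY y * PAXY a x y)) * (PBX b x * PBY b y)
                / (PX x * PY y * PA a * PB b * PXY x y) := by
            field_simp
          rw [e1, e2]
          apply div_le_div_of_nonneg_right _ (by positivity : (0:ℝ) ≤ PX x * PY y * PA a * PB b * PXY x y)
          exact mul_le_mul_of_nonneg_right (hkey a x y p1 p3)
            (mul_nonneg (hPBXnn b x) (hPBYnn b y))
      calc P2 a b * W a b ≤ s1 a b * s2 a b / (PA a * PB b) := hb1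
        _ = _ := hb2
        _ ≤ _ := Finset.sum_le_sum fun x _ => Finset.sum_le_sum fun y _ => hb3 x y
    -- step 3d-3e : sum the bound and telescope
    calc ∑ a, ∑ b, P2 a b * W a b
        ≤ ∑ a, ∑ b, ∑ x, ∑ y, κ * (PAXY a x y * (PBX b x * PBY b y / (PXY x y * PB b))) :=
          Finset.sum_le_sum fun a _ => Finset.sum_le_sum fun b _ => h3a a b
      _ = ∑ b, ∑ x, ∑ y, ∑ a, κ * (PAXY a x y * (PBX b x * PBY b y / (PXY x y * PB b))) := by
          rw [Finset.sum_comm]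
          refine Finset.sum_congr rfl fun b _ => ?_
          rw [Finset.sum_comm]
          refine Finset.sum_congr rfl fun x _ => ?_
          rw [Finset.sum_comm]
      _ = ∑ b, ∑ x, ∑ y, κ * (PXY x y * (PBX b x * PBY b y / (PXY x y * PB b))) := by
          refine Finset.sum_congr rfl fun b _ => Finset.sum_congr rfl fun x _ =>
            Finset.sum_congr rfl fun y _ => ?_
          rw [← Finset.mul_sum, ← Finset.sum_mul, hmargA x y]
      _ ≤ ∑ b, ∑ x, ∑ y, κ * (PBX b x * PBY b y / PB b) := by
          refine Finset.sum_le_sum fun b _ => Finset.sum_le_sum fun x _ =>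
            Finset.sum_le_sum fun y _ => ?_
          rcases eq_or_lt_of_le (hPXYnn x y) with z | hXY
          · rw [← z, zero_mul, mul_zero]
            have := hPBXnn b x; have := hPBYnn b y; have := hPBnn b
            positivity
          · apply le_of_eq
            rw [show PBX b x * PBY b y / (PXY x y * PB b)
                = (PBX b x * PBY b y / PB b) / PXY x y from by
              rw [div_div, mul_comm (PB b) (PXY x y)],
              mul_div_cancel₀ _ (ne_of_gt hXY)]
      _ = κ * ∑ b, (∑ x, PBX b x) * (∑ y, PBY b y) / PB b := by
          rw [Finset.mul_sum]
          refine Finset.sum_congr rfl fun b _ => ?_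
          rw [show (∑ x, PBX b x) * (∑ y, PBY b y) = ∑ x, ∑ y, PBX b x * PBY b y from
            Finset.sum_mul_sum _ _ _ _]
          rw [Finset.sum_div, Finset.mul_sum]
          refine Finset.sum_congr rfl fun x _ => ?_
          rw [Finset.sum_div, Finset.mul_sum]
      _ ≤ κ * ∑ b, PB b := by
          apply mul_le_mul_of_nonneg_left _ hκ.le
          refine Finset.sum_le_sum fun b _ => ?_
          rw [hmargX b, hmargY b]
          rcases eq_or_lt_of_le (hPBnn b) with z | hBp
          · rw [← z]
            simp
          · rw [mul_div_assoc, div_self (ne_of_gt hBp), mul_one]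
      _ = κ := by rw [hsumB, mul_one]
  -- step 2 : from ∑ P2 W ≤ κ conclude the logb bound
  have hlog2 : (0:ℝ) < Real.log 2 := Real.log_pos (by norm_num)
  have hWnn : ∀ a b, 0 ≤ W a b := fun a b => by
    have := hs1nn a b; have := hs2nn a b; have := hP2nn a b
    have := hPAnn a; have := hPBnn b
    rw [hW]
    positivity
  have step2 : ∑ a, ∑ b, P2 a b * Real.log (W a b) ≤ Real.log κ := by
    have hterm : ∀ a b, P2 a b * Real.log (W a b)
        ≤ P2 a b * W a b / κ - P2 a b + P2 a b * Real.log κ := by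
      intro a b
      rcases eq_or_lt_of_le (hP2nn a b) with h0 | hP2pos
      · rw [← h0]; simp
      · have hWpos : 0 < W a b := by
          have h1 := hs1pos a b hP2pos
          have h2 := hs2pos a b hP2pos
          have hA : 0 < PA a := lt_of_lt_of_le hP2pos (hP2A a b)
          have hBp : 0 < PB b := lt_of_lt_of_le hP2pos (hP2B a b)
          rw [hW]
          positivity
        have h1 : Real.log (W a b / κ) ≤ W a b / κ - 1 :=
          Real.log_le_sub_one_of_pos (by positivity)
        have h2 : Real.log (W a b / κ) = Real.log (W a b) - Real.log κ :=
          Real.log_div (ne_of_gt hWpos) (ne_of_gt hκ)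
        have h3 : P2 a b * (W a b / κ - 1) = P2 a b * W a b / κ - P2 a b := by ring
        nlinarith [hP2pos]
    calc ∑ a, ∑ b, P2 a b * Real.log (W a b)
        ≤ ∑ a, ∑ b, (P2 a b * W a b / κ - P2 a b + P2 a b * Real.log κ) :=
          Finset.sum_le_sum fun a _ => Finset.sum_le_sum fun b _ => hterm a b
      _ = (∑ a, ∑ b, P2 a b * W a b) / κ - (∑ a, ∑ b, P2 a b)
            + (∑ a, ∑ b, P2 a b) * Real.log κ := by
          simp only [Finset.sum_add_distrib, Finset.sum_sub_distrib, Finset.sum_div,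
            Finset.sum_mul]
      _ ≤ κ / κ - 1 + 1 * Real.log κ := by
          rw [hsum2]
          have : (∑ a, ∑ b, P2 a b * W a b) / κ ≤ κ / κ :=
            div_le_div_of_nonneg_right main hκ.le
          linarith
      _ = Real.log κ := by rw [div_self (ne_of_gt hκ)]; ring
  -- assemble
  calc ∑ a, ∑ b, (P2 a b * (Real.logb 2 (P2 a b) - Real.logb 2 (PA a) - Real.logb 2 (PB b))
        - P2 a b * Real.logb 2 (P2 a b / s1 a b)
        - P2 a b * Real.logb 2 (P2 a b / s2 a b))
      = ∑ a, ∑ b, (P2 a b * Real.log (W a b)) / Real.log 2 := by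
        refine Finset.sum_congr rfl fun a _ => Finset.sum_congr rfl fun b _ => ?_
        rw [eq1 a b, Real.logb]
        ring
    _ = (∑ a, ∑ b, P2 a b * Real.log (W a b)) / Real.log 2 := by
        rw [Finset.sum_div]
        exact Finset.sum_congr rfl fun a _ => by rw [Finset.sum_div]
    _ ≤ Real.log κ / Real.log 2 := div_le_div_of_nonneg_right step2 hlog2.le
    _ = Real.logb 2 κ := by rw [Real.logb]

end Core3


/-- Theorem 2: under condition (B), `I(A:B) ≤ I(A:B|X) + I(A:B|Y) + Δ'`, where `Δ'`
is the maximum of `log₂(p(a,x)p(a,y)p(x,y) / (p(a)p(x)p(y)p(a,x,y)))` over all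
triples with `p(a,x,y) > 0`. -/
theorem stmt_8 {Ω α β χ υ : Type*}
    [Fintype Ω] [Fintype α] [Fintype β] [Fintype χ] [Fintype υ]
    (p : Ω → ℝ) (hp : IsPMF p)
    (A : Ω → α) (B : Ω → β) (X : Ω → χ) (Y : Ω → υ)
    (hB : ∀ (a : α) (x : χ) (y : υ),
      0 < pr p {ω | A ω = a ∧ X ω = x} →
      0 < pr p {ω | A ω = a ∧ Y ω = y} →
      0 < pr p {ω | A ω = a ∧ X ω = x ∧ Y ω = y}) :
    mi p A B ≤ cmi p A B X + cmi p A B Y +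
      sSup {z : ℝ | ∃ (a : α) (x : χ) (y : υ),
        0 < pr p {ω | A ω = a ∧ X ω = x ∧ Y ω = y} ∧
        z = Real.logb 2
          (pr p {ω | A ω = a ∧ X ω = x} * pr p {ω | A ω = a ∧ Y ω = y}
              * pr p {ω | X ω = x ∧ Y ω = y}
            / (pr p {ω | A ω = a} * pr p {ω | X ω = x} * pr p {ω | Y ω = y}
                * pr p {ω | A ω = a ∧ X ω = x ∧ Y ω = y}))} := by
  classical
  obtain ⟨hp0, hp1⟩ := hp
  simp only [pr_eq_pe] at hB ⊢
  have nn : ∀ Q : Ω → Prop, 0 ≤ pe p Q := fun Q => pe_nonneg p hp0 Q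
  have mono : ∀ {Q R : Ω → Prop}, (∀ ω, Q ω → R ω) → pe p Q ≤ pe p R :=
    fun h => pe_mono p hp0 h
  set Δ : ℝ := sSup {z : ℝ | ∃ (a : α) (x : χ) (y : υ), 0 < pe p (fun ω => A ω = a ∧ X ω = x ∧ Y ω = y) ∧ z = Real.logb 2 (pe p (fun ω => A ω = a ∧ X ω = x) * pe p (fun ω => A ω = a ∧ Y ω = y) * pe p (fun ω => X ω = x ∧ Y ω = y) / (pe p (fun ω => A ω = a) * pe p (fun ω => X ω = x) * pe p (fun ω => Y ω = y) * pe p (fun ω => A ω = a ∧ X ω = x ∧ Y ω = y)))} with hΔdef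
  have hbdd : BddAbove {z : ℝ | ∃ (a : α) (x : χ) (y : υ), 0 < pe p (fun ω => A ω = a ∧ X ω = x ∧ Y ω = y) ∧ z = Real.logb 2 (pe p (fun ω => A ω = a ∧ X ω = x) * pe p (fun ω => A ω = a ∧ Y ω = y) * pe p (fun ω => X ω = x ∧ Y ω = y) / (pe p (fun ω => A ω = a) * pe p (fun ω => X ω = x) * pe p (fun ω => Y ω = y) * pe p (fun ω => A ω = a ∧ X ω = x ∧ Y ω = y)))} := by
    apply Set.Finite.bddAbove
    apply Set.Finite.subset (Set.finite_range (fun t : α × χ × υ => Real.logb 2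
      (pe p (fun ω => A ω = t.1 ∧ X ω = t.2.1) * pe p (fun ω => A ω = t.1 ∧ Y ω = t.2.2)
          * pe p (fun ω => X ω = t.2.1 ∧ Y ω = t.2.2)
        / (pe p (fun ω => A ω = t.1) * pe p (fun ω => X ω = t.2.1) * pe p (fun ω => Y ω = t.2.2)
            * pe p (fun ω => A ω = t.1 ∧ X ω = t.2.1 ∧ Y ω = t.2.2)))))
    rintro z ⟨a, x, y, -, rfl⟩
    exact ⟨(a, x, y), rfl⟩
  set κ : ℝ := (2:ℝ) ^ Δ with hκdef
  have hκpos : 0 < κ := Real.rpow_pos_of_pos (by norm_num) Δ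
  have hlogκ : Real.logb 2 κ = Δ := Real.logb_rpow (by norm_num) (by norm_num)
  -- key bound from the definition of Δ and condition (B)
  have hkey : ∀ a x y, 0 < pe p (fun ω => A ω = a ∧ X ω = x) → 0 < pe p (fun ω => A ω = a ∧ Y ω = y) →
      pe p (fun ω => A ω = a ∧ X ω = x) * pe p (fun ω => A ω = a ∧ Y ω = y) * pe p (fun ω => X ω = x ∧ Y ω = y) ≤ κ * (pe p (fun ω => A ω = a) * pe p (fun ω => X ω = x) * pe p (fun ω => Y ω = y) * pe p (fun ω => A ω = a ∧ X ω = x ∧ Y ω = y)) := by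
    intro a x y h1 h2
    have hAXY : 0 < pe p (fun ω => A ω = a ∧ X ω = x ∧ Y ω = y) := hB a x y h1 h2
    have hXY : 0 < pe p (fun ω => X ω = x ∧ Y ω = y) := lt_of_lt_of_le hAXY (mono fun ω h => ⟨h.2.1, h.2.2⟩)
    have hA : 0 < pe p (fun ω => A ω = a) := lt_of_lt_of_le h1 (mono fun ω h => h.1)
    have hX : 0 < pe p (fun ω => X ω = x) := lt_of_lt_of_le h1 (mono fun ω h => h.2)
    have hY : 0 < pe p (fun ω => Y ω = y) := lt_of_lt_of_le h2 (mono fun ω h => h.2)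
    have hD : 0 < pe p (fun ω => A ω = a) * pe p (fun ω => X ω = x) * pe p (fun ω => Y ω = y) * pe p (fun ω => A ω = a ∧ X ω = x ∧ Y ω = y) := by positivity
    have hmem : Real.logb 2 (pe p (fun ω => A ω = a ∧ X ω = x) * pe p (fun ω => A ω = a ∧ Y ω = y) * pe p (fun ω => X ω = x ∧ Y ω = y)
        / (pe p (fun ω => A ω = a) * pe p (fun ω => X ω = x) * pe p (fun ω => Y ω = y) * pe p (fun ω => A ω = a ∧ X ω = x ∧ Y ω = y))) ∈ {z : ℝ | ∃ (a : α) (x : χ) (y : υ), 0 < pe p (fun ω => A ω = a ∧ X ω = x ∧ Y ω = y) ∧ z = Real.logb 2 (pe p (fun ω => A ω = a ∧ X ω = x) * pe p (fun ω => A ω = a ∧ Y ω = y) * pe p (fun ω => X ω = x ∧ Y ω = y) / (pe p (fun ω => A ω = a) * pe p (fun ω => X ω = x) * pe p (fun ω => Y ω = y) * pe p (fun ω => A ω = a ∧ X ω = x ∧ Y ω = y)))} := ⟨a, x, y, hAXY, rfl⟩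
    have hle := le_csSup hbdd hmem
    have htpos : 0 < pe p (fun ω => A ω = a ∧ X ω = x) * pe p (fun ω => A ω = a ∧ Y ω = y) * pe p (fun ω => X ω = x ∧ Y ω = y) / (pe p (fun ω => A ω = a) * pe p (fun ω => X ω = x) * pe p (fun ω => Y ω = y) * pe p (fun ω => A ω = a ∧ X ω = x ∧ Y ω = y)) := by positivity
    have ht : pe p (fun ω => A ω = a ∧ X ω = x) * pe p (fun ω => A ω = a ∧ Y ω = y) * pe p (fun ω => X ω = x ∧ Y ω = y) / (pe p (fun ω => A ω = a) * pe p (fun ω => X ω = x) * pe p (fun ω => Y ω = y) * pe p (fun ω => A ω = a ∧ X ω = x ∧ Y ω = y)) ≤ κ := by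
      rw [hκdef]
      calc pe p (fun ω => A ω = a ∧ X ω = x) * pe p (fun ω => A ω = a ∧ Y ω = y) * pe p (fun ω => X ω = x ∧ Y ω = y) / (pe p (fun ω => A ω = a) * pe p (fun ω => X ω = x) * pe p (fun ω => Y ω = y) * pe p (fun ω => A ω = a ∧ X ω = x ∧ Y ω = y))
          = (2:ℝ) ^ (Real.logb 2 (pe p (fun ω => A ω = a ∧ X ω = x) * pe p (fun ω => A ω = a ∧ Y ω = y) * pe p (fun ω => X ω = x ∧ Y ω = y) / (pe p (fun ω => A ω = a) * pe p (fun ω => X ω = x) * pe p (fun ω => Y ω = y) * pe p (fun ω => A ω = a ∧ X ω = x ∧ Y ω = y)))) :=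
            (Real.rpow_logb (by norm_num) (by norm_num) htpos).symm
        _ ≤ (2:ℝ) ^ Δ := (Real.rpow_le_rpow_left_iff (by norm_num : (1:ℝ) < 2)).mpr hle
    exact (div_le_iff₀ hD).mp ht
  -- marginalization facts
  have mA : ∀ a, pe p (fun ω => A ω = a) = ∑ b, pe p (fun ω => A ω = a ∧ B ω = b) := fun a => (pe_marg p (fun ω => A ω = a) B).symm
  have mB : ∀ b, pe p (fun ω => B ω = b) = ∑ a, pe p (fun ω => A ω = a ∧ B ω = b) := by
    intro b
    rw [← pe_marg p (fun ω => B ω = b) A]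
    exact Finset.sum_congr rfl fun a _ => pe_congr p fun ω => by tauto
  have mAB_X : ∀ a b, pe p (fun ω => A ω = a ∧ B ω = b) = ∑ x, pe p (fun ω => A ω = a ∧ B ω = b ∧ X ω = x) := by
    intro a b
    rw [← pe_marg p (fun ω => A ω = a ∧ B ω = b) X]
    exact Finset.sum_congr rfl fun x _ => pe_congr p fun ω => by tauto
  have mAB_Y : ∀ a b, pe p (fun ω => A ω = a ∧ B ω = b) = ∑ y, pe p (fun ω => A ω = a ∧ B ω = b ∧ Y ω = y) := by
    intro a b
    rw [← pe_marg p (fun ω => A ω = a ∧ B ω = b) Y]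
    exact Finset.sum_congr rfl fun y _ => pe_congr p fun ω => by tauto
  have mAX : ∀ a x, pe p (fun ω => A ω = a ∧ X ω = x) = ∑ b, pe p (fun ω => A ω = a ∧ B ω = b ∧ X ω = x) := by
    intro a x
    rw [← pe_marg p (fun ω => A ω = a ∧ X ω = x) B]
    exact Finset.sum_congr rfl fun b _ => pe_congr p fun ω => by tauto
  have mAY : ∀ a y, pe p (fun ω => A ω = a ∧ Y ω = y) = ∑ b, pe p (fun ω => A ω = a ∧ B ω = b ∧ Y ω = y) := by
    intro a y
    rw [← pe_marg p (fun ω => A ω = a ∧ Y ω = y) B]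
    exact Finset.sum_congr rfl fun b _ => pe_congr p fun ω => by tauto
  have mBX : ∀ b x, pe p (fun ω => B ω = b ∧ X ω = x) = ∑ a, pe p (fun ω => A ω = a ∧ B ω = b ∧ X ω = x) := by
    intro b x
    rw [← pe_marg p (fun ω => B ω = b ∧ X ω = x) A]
    exact Finset.sum_congr rfl fun a _ => pe_congr p fun ω => by tauto
  have mBY : ∀ b y, pe p (fun ω => B ω = b ∧ Y ω = y) = ∑ a, pe p (fun ω => A ω = a ∧ B ω = b ∧ Y ω = y) := by
    intro b y
    rw [← pe_marg p (fun ω => B ω = b ∧ Y ω = y) A]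
    exact Finset.sum_congr rfl fun a _ => pe_congr p fun ω => by tauto
  have mX : ∀ x, pe p (fun ω => X ω = x) = ∑ a, ∑ b, pe p (fun ω => A ω = a ∧ B ω = b ∧ X ω = x) := by
    intro x
    rw [← pe_marg p (fun ω => X ω = x) A]
    refine Finset.sum_congr rfl fun a _ => ?_
    rw [← pe_marg p (fun ω => X ω = x ∧ A ω = a) B]
    exact Finset.sum_congr rfl fun b _ => pe_congr p fun ω => by tauto
  have mY : ∀ y, pe p (fun ω => Y ω = y) = ∑ a, ∑ b, pe p (fun ω => A ω = a ∧ B ω = b ∧ Y ω = y) := by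
    intro y
    rw [← pe_marg p (fun ω => Y ω = y) A]
    refine Finset.sum_congr rfl fun a _ => ?_
    rw [← pe_marg p (fun ω => Y ω = y ∧ A ω = a) B]
    exact Finset.sum_congr rfl fun b _ => pe_congr p fun ω => by tauto
  have mXY : ∀ x y, ∑ a, pe p (fun ω => A ω = a ∧ X ω = x ∧ Y ω = y) = pe p (fun ω => X ω = x ∧ Y ω = y) := by
    intro x y
    rw [Finset.sum_congr rfl fun a (_ : a ∈ Finset.univ) =>
      pe_congr p (Q := fun ω => A ω = a ∧ X ω = x ∧ Y ω = y)
        (R := fun ω => (X ω = x ∧ Y ω = y) ∧ A ω = a) (fun ω => by tauto)]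
    exact pe_marg p (fun ω => X ω = x ∧ Y ω = y) A
  have mBx : ∀ b, ∑ x, pe p (fun ω => B ω = b ∧ X ω = x) = pe p (fun ω => B ω = b) := fun b => pe_marg p (fun ω => B ω = b) X
  have mBy : ∀ b, ∑ y, pe p (fun ω => B ω = b ∧ Y ω = y) = pe p (fun ω => B ω = b) := fun b => pe_marg p (fun ω => B ω = b) Y
  have hsum2 : ∑ a, ∑ b, pe p (fun ω => A ω = a ∧ B ω = b) = 1 := by
    rw [Finset.sum_congr rfl fun a (_ : a ∈ Finset.univ) => pe_marg p (fun ω => A ω = a) B]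
    rw [pe_total p A]
    exact hp1
  have hsumB : ∑ b, pe p (fun ω => B ω = b) = 1 := by rw [pe_total p B]; exact hp1
  -- positivity of the inner sums
  have hs1pos : ∀ a b, 0 < pe p (fun ω => A ω = a ∧ B ω = b) → 0 < ∑ x, pe p (fun ω => A ω = a ∧ X ω = x) * pe p (fun ω => B ω = b ∧ X ω = x) / pe p (fun ω => X ω = x) := by
    intro a b h
    rw [mAB_X a b] at h
    obtain ⟨x, -, hx⟩ := exists_pos_of_sum_pos' h
    have h1 : 0 < pe p (fun ω => A ω = a ∧ X ω = x) := lt_of_lt_of_le hx (mono fun ω hh => ⟨hh.1, hh.2.2⟩)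
    have h2 : 0 < pe p (fun ω => B ω = b ∧ X ω = x) := lt_of_lt_of_le hx (mono fun ω hh => ⟨hh.2.1, hh.2.2⟩)
    have h3 : 0 < pe p (fun ω => X ω = x) := lt_of_lt_of_le h1 (mono fun ω hh => hh.2)
    have hterm : 0 < pe p (fun ω => A ω = a ∧ X ω = x) * pe p (fun ω => B ω = b ∧ X ω = x) / pe p (fun ω => X ω = x) := by positivity
    exact lt_of_lt_of_le hterm (Finset.single_le_sum
      (f := fun x' => pe p (fun ω => A ω = a ∧ X ω = x') * pe p (fun ω => B ω = b ∧ X ω = x')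
        / pe p (fun ω => X ω = x'))
      (fun x' _ => div_nonneg (mul_nonneg (nn _) (nn _)) (nn _)) (Finset.mem_univ x))
  have hs2pos : ∀ a b, 0 < pe p (fun ω => A ω = a ∧ B ω = b) → 0 < ∑ y, pe p (fun ω => A ω = a ∧ Y ω = y) * pe p (fun ω => B ω = b ∧ Y ω = y) / pe p (fun ω => Y ω = y) := by
    intro a b h
    rw [mAB_Y a b] at h
    obtain ⟨y, -, hy⟩ := exists_pos_of_sum_pos' h
    have h1 : 0 < pe p (fun ω => A ω = a ∧ Y ω = y) := lt_of_lt_of_le hy (mono fun ω hh => ⟨hh.1, hh.2.2⟩)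
    have h2 : 0 < pe p (fun ω => B ω = b ∧ Y ω = y) := lt_of_lt_of_le hy (mono fun ω hh => ⟨hh.2.1, hh.2.2⟩)
    have h3 : 0 < pe p (fun ω => Y ω = y) := lt_of_lt_of_le h1 (mono fun ω hh => hh.2)
    have hterm : 0 < pe p (fun ω => A ω = a ∧ Y ω = y) * pe p (fun ω => B ω = b ∧ Y ω = y) / pe p (fun ω => Y ω = y) := by positivity
    exact lt_of_lt_of_le hterm (Finset.single_le_sum
      (f := fun y' => pe p (fun ω => A ω = a ∧ Y ω = y') * pe p (fun ω => B ω = b ∧ Y ω = y')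
        / pe p (fun ω => Y ω = y'))
      (fun y' _ => div_nonneg (mul_nonneg (nn _) (nn _)) (nn _)) (Finset.mem_univ y))
  -- the three analytic facts
  have hmi : mi p A B = ∑ a, ∑ b, pe p (fun ω => A ω = a ∧ B ω = b) * (Real.logb 2 (pe p (fun ω => A ω = a ∧ B ω = b)) - Real.logb 2 (pe p (fun ω => A ω = a)) - Real.logb 2 (pe p (fun ω => B ω = b))) := by
    rw [mi, ent_single p A, ent_single p B, ent_pair p A B]
    exact core2 (fun a b => pe p (fun ω => A ω = a ∧ B ω = b)) (fun a => pe p (fun ω => A ω = a)) (fun b => pe p (fun ω => B ω = b)) mA mB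
  have hcmiX : ∑ a, ∑ b, pe p (fun ω => A ω = a ∧ B ω = b) * Real.logb 2 (pe p (fun ω => A ω = a ∧ B ω = b) / (∑ x, pe p (fun ω => A ω = a ∧ X ω = x) * pe p (fun ω => B ω = b ∧ X ω = x) / pe p (fun ω => X ω = x))) ≤ cmi p A B X := by
    rw [cmi, ent_pair p A X, ent_pair p B X, ent_triple p A B X, ent_single p X]
    exact core1 (fun a b x => pe p (fun ω => A ω = a ∧ B ω = b ∧ X ω = x)) (fun a x => pe p (fun ω => A ω = a ∧ X ω = x)) (fun b x => pe p (fun ω => B ω = b ∧ X ω = x))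
      (fun x => pe p (fun ω => X ω = x)) (fun a b => pe p (fun ω => A ω = a ∧ B ω = b)) (fun a b x => nn _) mAX mBX mX mAB_X
  have hcmiY : ∑ a, ∑ b, pe p (fun ω => A ω = a ∧ B ω = b) * Real.logb 2 (pe p (fun ω => A ω = a ∧ B ω = b) / (∑ y, pe p (fun ω => A ω = a ∧ Y ω = y) * pe p (fun ω => B ω = b ∧ Y ω = y) / pe p (fun ω => Y ω = y))) ≤ cmi p A B Y := by
    rw [cmi, ent_pair p A Y, ent_pair p B Y, ent_triple p A B Y, ent_single p Y]
    exact core1 (fun a b y => pe p (fun ω => A ω = a ∧ B ω = b ∧ Y ω = y)) (fun a y => pe p (fun ω => A ω = a ∧ Y ω = y)) (fun b y => pe p (fun ω => B ω = b ∧ Y ω = y))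
      (fun y => pe p (fun ω => Y ω = y)) (fun a b => pe p (fun ω => A ω = a ∧ B ω = b)) (fun a b y => nn _) mAY mBY mY mAB_Y
  have hfinal : ∑ a, ∑ b, (pe p (fun ω => A ω = a ∧ B ω = b) * (Real.logb 2 (pe p (fun ω => A ω = a ∧ B ω = b)) - Real.logb 2 (pe p (fun ω => A ω = a)) - Real.logb 2 (pe p (fun ω => B ω = b))) - pe p (fun ω => A ω = a ∧ B ω = b) * Real.logb 2 (pe p (fun ω => A ω = a ∧ B ω = b) / (∑ x, pe p (fun ω => A ω = a ∧ X ω = x) * pe p (fun ω => B ω = b ∧ X ω = x) / pe p (fun ω => X ω = x))) - pe p (fun ω => A ω = a ∧ B ω = b) * Real.logb 2 (pe p (fun ω => A ω = a ∧ B ω = b) / (∑ y, pe p (fun ω => A ω = a ∧ Y ω = y) * pe p (fun ω => B ω = b ∧ Y ω = y) / pe p (fun ω => Y ω = y)))) ≤ Real.logb 2 κ := by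
    refine core3 (fun a b => pe p (fun ω => A ω = a ∧ B ω = b)) (fun a => pe p (fun ω => A ω = a)) (fun b => pe p (fun ω => B ω = b))
      (fun x => pe p (fun ω => X ω = x)) (fun y => pe p (fun ω => Y ω = y)) (fun a x => pe p (fun ω => A ω = a ∧ X ω = x)) (fun a y => pe p (fun ω => A ω = a ∧ Y ω = y))
      (fun b x => pe p (fun ω => B ω = b ∧ X ω = x)) (fun b y => pe p (fun ω => B ω = b ∧ Y ω = y)) (fun x y => pe p (fun ω => X ω = x ∧ Y ω = y)) (fun a x y => pe p (fun ω => A ω = a ∧ X ω = x ∧ Y ω = y)) κ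
      (fun a b => nn _) (fun a => nn _) (fun b => nn _) (fun x => nn _) (fun y => nn _)
      (fun a x => nn _) (fun a y => nn _) (fun b x => nn _) (fun b y => nn _)
      (fun x y => nn _) (fun a x y => nn _)
      (fun a b => mono fun ω h => h.1) (fun a b => mono fun ω h => h.2)
      (fun a x => mono fun ω h => h.1) (fun a x => mono fun ω h => h.2)
      (fun a y => mono fun ω h => h.2)
      mXY mBx mBy hsum2 hsumB hs1pos hs2pos hB hkey hκpos
  rw [hlogκ] at hfinal
  have hsplit : ∑ a, ∑ b, (pe p (fun ω => A ω = a ∧ B ω = b) * (Real.logb 2 (pe p (fun ω => A ω = a ∧ B ω = b)) - Real.logb 2 (pe p (fun ω => A ω = a)) - Real.logb 2 (pe p (fun ω => B ω = b))) - pe p (fun ω => A ω = a ∧ B ω = b) * Real.logb 2 (pe p (fun ω => A ω = a ∧ B ω = b) / (∑ x, pe p (fun ω => A ω = a ∧ X ω = x) * pe p (fun ω => B ω = b ∧ X ω = x) / pe p (fun ω => X ω = x))) - pe p (fun ω => A ω = a ∧ B ω = b) * Real.logb 2 (pe p (fun ω => A ω = a ∧ B ω = b) / (∑ y, pe p (fun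 ω => A ω = a ∧ Y ω = y) * pe p (fun ω => B ω = b ∧ Y ω = y) / pe p (fun ω => Y ω = y))))
      = (∑ a, ∑ b, pe p (fun ω => A ω = a ∧ B ω = b) * (Real.logb 2 (pe p (fun ω => A ω = a ∧ B ω = b)) - Real.logb 2 (pe p (fun ω => A ω = a)) - Real.logb 2 (pe p (fun ω => B ω = b)))) - (∑ a, ∑ b, pe p (fun ω => A ω = a ∧ B ω = b) * Real.logb 2 (pe p (fun ω => A ω = a ∧ B ω = b) / (∑ x, pe p (fun ω => A ω = a ∧ X ω = x) * pe p (fun ω => B ω = b ∧ X ω = x) / pe p (fun ω => X ω = x)))) - (∑ a, ∑ b, pe p (fun ω => A ω = a ∧ B ω = b) * Real.logb 2 (pe p (fun ω => A ω = a ∧ B ω = b) / (∑ y, pe p (fun ω => A ω = a ∧ Y ω = y) * pe p (fun ω => B ω = b ∧ Y ω = y) / pe p (fun ω => Y ω = y)))) := by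
    simp only [Finset.sum_sub_distrib]
  rw [hsplit] at hfinal
  linarith [hcmiX, hcmiY, hfinal, hmi]
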